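/- Sequential product-state construction: Let G be a k-QSAT interaction hypergraph on N qubits with clauses S_1, …, S_M. Suppose the clauses can be ordered as m_1, …, m_M together with pairwise distinct qubits q_1, …, q_M such that q_j ∈ S_{m_j} and q_j ∉ S_{m_i} for all i < j. Then for EVERY choice of the clause vectors φ_1, …, φ_M there exist nonzero vectors v_1, …, v_N ∈ ℂ² with Π_m (v_1 ⊗ ⋯ ⊗ v_N) = 0 for every clause m; in particular H_φ (v_1 ⊗ ⋯ ⊗ v_N) = 0. -/
import Mathlib


open scoped BigOperators

noncomputable section

/-- The matrix of the rank-one projector `|φ⟩⟨φ|` acting on the qubits in the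
`k`-element set `S` and as the identity on the remaining qubits. -/
def clauseProj {N : ℕ} (S : Finset (Fin N)) (φ : ({i // i ∈ S} → Fin 2) → ℂ) :
    Matrix (Fin N → Fin 2) (Fin N → Fin 2) ℂ :=
  fun σ τ =>
    (if ∀ i : Fin N, i ∉ S → σ i = τ i then (1 : ℂ) else 0) *
      φ (fun i => σ i.1) * (starRingEnd ℂ) (φ (fun i => τ i.1))

/-- The `k`-QSAT Hamiltonian `H_φ = ∑ m, Π_m` associated to the interaction
hypergraph `S : Fin M → Finset (Fin N)` and the clause vectors `φ m`. -/
def qsatHam {N M : ℕ} (S : Fin M → Finset (Fin N))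
    (φ : ∀ m, ({i // i ∈ S m} → Fin 2) → ℂ) :
    Matrix (Fin N → Fin 2) (Fin N → Fin 2) ℂ :=
  ∑ m, clauseProj (S m) (φ m)

/-- `φ` is a unit vector. -/
def IsUnitVec {α : Type*} [Fintype α] (φ : α → ℂ) : Prop :=
  ∑ x, Complex.normSq (φ x) = 1

/-- The dimension of the zero-energy eigenspace `ker H_φ`. -/
def kerDim {N M : ℕ} (S : Fin M → Finset (Fin N))
    (φ : ∀ m, ({i // i ∈ S m} → Fin 2) → ℂ) : ℕ :=
  Module.finrank ℂ (LinearMap.ker (Matrix.mulVecLin (qsatHam S φ)))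

/-- The product state `v_1 ⊗ ⋯ ⊗ v_N`. -/
def prodState {N : ℕ} (v : Fin N → Fin 2 → ℂ) : (Fin N → Fin 2) → ℂ :=
  fun σ => ∏ i, v i (σ i)

/-- The contraction of `conj φ` with `w` at all qubits of `S` except `a`. -/
def contr {N : ℕ} (S : Finset (Fin N)) (φ : ({i // i ∈ S} → Fin 2) → ℂ)
    (a : Fin N) (w : Fin N → Fin 2 → ℂ) (b : Fin 2) : ℂ :=
  ∑ τ : ({i // i ∈ S} → Fin 2),
    (if h : a ∈ S then (if τ ⟨a, h⟩ = b then (1:ℂ) else 0) else 0) *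
      (starRingEnd ℂ) (φ τ) * ∏ i : {i // i ∈ S}, if i.1 = a then 1 else w i.1 (τ i)

/-- A nonzero vector orthogonal (bilinearly) to `c`. -/
def pick (c : Fin 2 → ℂ) : Fin 2 → ℂ :=
  if c = 0 then ![1, 0] else ![c 1, -(c 0)]

lemma pick_ne_zero (c : Fin 2 → ℂ) : pick c ≠ 0 := by
  unfold pick
  split_ifs with h
  · intro hc
    have := congrFun hc 0
    simp at this
  · intro hc
    apply h
    funext b
    fin_cases b
    · have := congrFun hc 1
      simpa using this
    · have := congrFun hc 0
      simpa using this

lemma pick_orth (c : Fin 2 → ℂ) : ∑ b, pick c b * c b = 0 := by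
  unfold pick
  split_ifs with h
  · simp [h]
  · rw [Fin.sum_univ_two]
    simp only [Matrix.cons_val_zero, Matrix.cons_val_one, Matrix.head_cons]
    ring

lemma contr_congr {N : ℕ} (S : Finset (Fin N)) (φ : ({i // i ∈ S} → Fin 2) → ℂ)
    (a : Fin N) (w w' : Fin N → Fin 2 → ℂ) (h : ∀ p, p ≠ a → w p = w' p) :
    contr S φ a w = contr S φ a w' := by
  funext b
  unfold contr
  refine Finset.sum_congr rfl fun τ _ => ?_
  congr 1
  refine Finset.prod_congr rfl fun i _ => ?_
  by_cases hi : i.1 = a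
  · simp [hi]
  · simp [hi, h i.1 hi]

lemma prod_split {N : ℕ} (S : Finset (Fin N)) (a : Fin N) (ha : a ∈ S)
    (v : Fin N → Fin 2 → ℂ) (τ : {i // i ∈ S} → Fin 2) :
    ∏ i : {i // i ∈ S}, v i.1 (τ i) =
      v a (τ ⟨a, ha⟩) * ∏ i : {i // i ∈ S}, if i.1 = a then 1 else v i.1 (τ i) := by
  have key : ∀ i : {i // i ∈ S}, v i.1 (τ i) =
      (if i = ⟨a, ha⟩ then v a (τ ⟨a, ha⟩) else 1) *
        (if i.1 = a then 1 else v i.1 (τ i)) := by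
    intro i
    by_cases hi : i = ⟨a, ha⟩
    · subst hi; simp
    · have : i.1 ≠ a := fun h => hi (Subtype.ext h)
      simp [hi, this]
  calc ∏ i : {i // i ∈ S}, v i.1 (τ i)
      = ∏ i : {i // i ∈ S}, ((if i = ⟨a, ha⟩ then v a (τ ⟨a, ha⟩) else 1) *
          (if i.1 = a then 1 else v i.1 (τ i))) := Finset.prod_congr rfl fun i _ => key i
    _ = (∏ i : {i // i ∈ S}, if i = ⟨a, ha⟩ then v a (τ ⟨a, ha⟩) else 1) *
          ∏ i : {i // i ∈ S}, if i.1 = a then 1 else v i.1 (τ i) := Finset.prod_mul_distrib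
    _ = v a (τ ⟨a, ha⟩) * ∏ i : {i // i ∈ S}, if i.1 = a then 1 else v i.1 (τ i) := by
        rw [Finset.prod_ite_eq' Finset.univ (⟨a, ha⟩ : {i // i ∈ S})
          (fun _ => v a (τ ⟨a, ha⟩))]
        simp

/-- Factorization of the clause inner product over the distinguished qubit. -/
lemma inner_factor {N : ℕ} (S : Finset (Fin N)) (φ : ({i // i ∈ S} → Fin 2) → ℂ)
    (a : Fin N) (ha : a ∈ S) (v : Fin N → Fin 2 → ℂ) :
    ∑ τ : ({i // i ∈ S} → Fin 2), (starRingEnd ℂ) (φ τ) * ∏ i : {i // i ∈ S}, v i.1 (τ i)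
      = ∑ b, v a b * contr S φ a v b := by
  unfold contr
  simp only [Finset.mul_sum]
  rw [Finset.sum_comm]
  refine Finset.sum_congr rfl fun τ _ => ?_
  rw [prod_split S a ha v τ]
  simp only [dif_pos ha]
  rw [Fintype.sum_eq_single (τ ⟨a, ha⟩)]
  · simp; ring
  · intro b hb
    rw [if_neg (fun h => hb h.symm)]
    ring

/-- If the product state is orthogonal to the clause vector on `S`, the clause
projector annihilates it. -/
lemma mulVec_clauseProj_eq_zero {N : ℕ} (S : Finset (Fin N))
    (φ : ({i // i ∈ S} → Fin 2) → ℂ) (v : Fin N → Fin 2 → ℂ)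
    (h : ∑ τ : ({i // i ∈ S} → Fin 2),
        (starRingEnd ℂ) (φ τ) * ∏ i : {i // i ∈ S}, v i.1 (τ i) = 0) :
    Matrix.mulVec (clauseProj S φ) (prodState v) = 0 := by
  funext σ
  show ∑ τ, clauseProj S φ σ τ * prodState v τ = 0
  rw [← Equiv.sum_comp (Equiv.piEquivPiSubtypeProd (· ∈ S) (fun _ => Fin 2)).symm
    (fun τ => clauseProj S φ σ τ * prodState v τ)]
  rw [Fintype.sum_prod_type]
  have key : ∀ (f : {i // i ∈ S} → Fin 2) (g : {i : Fin N // ¬ i ∈ S} → Fin 2),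
      clauseProj S φ σ ((Equiv.piEquivPiSubtypeProd (· ∈ S) (fun _ => Fin 2)).symm (f, g)) *
        prodState v ((Equiv.piEquivPiSubtypeProd (· ∈ S) (fun _ => Fin 2)).symm (f, g)) =
      (if g = (fun i => σ i.1) then
        (φ (fun i => σ i.1) * ∏ i : {i : Fin N // ¬ i ∈ S}, v i.1 (σ i.1)) *
          ((starRingEnd ℂ) (φ f) * ∏ i : {i // i ∈ S}, v i.1 (f i))
      else 0) := by
    intro f g
    have happ : ∀ x : Fin N,
        (Equiv.piEquivPiSubtypeProd (· ∈ S) (fun _ => Fin 2)).symm (f, g) x =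
          if h : x ∈ S then f ⟨x, h⟩ else g ⟨x, h⟩ :=
      fun x => Equiv.piEquivPiSubtypeProd_symm_apply (· ∈ S) (fun _ => Fin 2) (f, g) x
    unfold clauseProj prodState
    rw [← Fintype.prod_subtype_mul_prod_subtype (· ∈ S)
      (fun i => v i ((Equiv.piEquivPiSubtypeProd (· ∈ S) (fun _ => Fin 2)).symm (f, g) i))]
    simp only [happ]
    have e2 : ∀ i : {i // i ∈ S},
        (if h : (i : Fin N) ∈ S then f ⟨i, h⟩ else g ⟨i, h⟩) = f i := by
      intro i; rw [dif_pos i.2]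
    have e3 : ∀ i : {i : Fin N // ¬ i ∈ S},
        (if h : (i : Fin N) ∈ S then f ⟨i, h⟩ else g ⟨i, h⟩) = g i := by
      intro i; rw [dif_neg i.2]
    have hcond : (∀ i : Fin N, i ∉ S → σ i = if h : i ∈ S then f ⟨i, h⟩ else g ⟨i, h⟩) ↔
        (g = fun i => σ i.1) := by
      constructor
      · intro hc
        funext i
        have := hc i.1 i.2
        rw [dif_neg i.2] at this
        exact this.symm
      · intro hgg i hi
        rw [dif_neg hi, hgg]
    simp only [e2, e3, hcond]
    split_ifs with hg
    · subst hg
      beta_reduce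
      rw [one_mul, show ∀ a c p1 p2 : ℂ, a * c * (p1 * p2) = (a * p2) * (c * p1) from
        fun a c p1 p2 => by ring]
      convert rfl
    · ring
  rw [Finset.sum_congr rfl (fun f _ => Finset.sum_congr rfl (fun g _ => key f g))]
  simp only [Finset.sum_ite_eq' Finset.univ, Finset.mem_univ, if_true]
  rw [← Finset.mul_sum, h, mul_zero]

/-- The sequential construction of the single-qubit vectors. -/
def seqV {N M : ℕ} (S : Fin M → Finset (Fin N))
    (φ : ∀ m, ({i // i ∈ S m} → Fin 2) → ℂ)
    (ord : Equiv.Perm (Fin M)) (q : Fin M → Fin N) : ℕ → Fin N → Fin 2 → ℂ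
  | 0 => fun _ => ![1, 0]
  | n + 1 =>
    if h : n < M then
      Function.update (seqV S φ ord q n) (q ⟨n, h⟩)
        (pick (contr (S (ord ⟨n, h⟩)) (φ (ord ⟨n, h⟩)) (q ⟨n, h⟩) (seqV S φ ord q n)))
    else seqV S φ ord q n

lemma seqV_ne_zero {N M : ℕ} (S : Fin M → Finset (Fin N))
    (φ : ∀ m, ({i // i ∈ S m} → Fin 2) → ℂ)
    (ord : Equiv.Perm (Fin M)) (q : Fin M → Fin N) (n : ℕ) (p : Fin N) :
    seqV S φ ord q n p ≠ 0 := by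
  induction n with
  | zero =>
    intro hc
    have := congrFun hc 0
    simp [seqV] at this
  | succ n ih =>
    rw [seqV]
    split_ifs with h
    · by_cases hp : p = q ⟨n, h⟩
      · subst hp; rw [Function.update_self]; exact pick_ne_zero _
      · rw [Function.update_of_ne hp]; exact ih
    · exact ih

lemma seqV_stable {N M : ℕ} (S : Fin M → Finset (Fin N))
    (φ : ∀ m, ({i // i ∈ S m} → Fin 2) → ℂ)
    (ord : Equiv.Perm (Fin M)) (q : Fin M → Fin N) (n : ℕ) (p : Fin N)
    (hp : ∀ i : Fin M, n ≤ (i : ℕ) → p ≠ q i) :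
    ∀ m, n ≤ m → seqV S φ ord q m p = seqV S φ ord q n p := by
  intro m hm
  induction m, hm using Nat.le_induction with
  | base => rfl
  | succ m hm ih =>
    rw [seqV]
    split_ifs with h
    · rw [Function.update_of_ne (hp ⟨m, h⟩ (by simpa using hm))]
      exact ih
    · exact ih

/-- **Sequential product-state construction.**  If the clauses can be ordered
`ord 0, ord 1, …` together with pairwise distinct qubits `q j ∈ S (ord j)` such that
`q j` does not occur in any earlier clause `S (ord i)`, `i < j`, then for *every*
choice of clause vectors there is a satisfying product state, annihilated by every
individual clause projector and hence by `H_φ`. -/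
theorem sequential_product_state (N M k : ℕ)
    (S : Fin M → Finset (Fin N)) (hS : ∀ m, (S m).card = k)
    (ord : Equiv.Perm (Fin M)) (q : Fin M → Fin N)
    (hq_inj : Function.Injective q)
    (hq_mem : ∀ j, q j ∈ S (ord j))
    (hq_fresh : ∀ i j : Fin M, i < j → q j ∉ S (ord i)) :
    ∀ φ : ∀ m, ({i // i ∈ S m} → Fin 2) → ℂ, (∀ m, IsUnitVec (φ m)) →
      ∃ v : Fin N → Fin 2 → ℂ, (∀ i, v i ≠ 0) ∧
        (∀ m, Matrix.mulVec (clauseProj (S m) (φ m)) (prodState v) = 0) ∧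
        Matrix.mulVec (qsatHam S φ) (prodState v) = 0 := by
  intro φ _hunit
  set v : Fin N → Fin 2 → ℂ := seqV S φ ord q M with hv
  have hvne : ∀ i, v i ≠ 0 := fun i => seqV_ne_zero S φ ord q M i
  -- the key orthogonality for each clause
  have hinner : ∀ j : Fin M,
      ∑ τ : ({i // i ∈ S (ord j)} → Fin 2),
        (starRingEnd ℂ) (φ (ord j) τ) * ∏ i : {i // i ∈ S (ord j)}, v i.1 (τ i) = 0 := by
    intro j
    set n : ℕ := (j : ℕ) with hn
    have hnM : n < M := j.2
    have hjn : (⟨n, hnM⟩ : Fin M) = j := Fin.ext rfl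
    -- v agrees with seqV (n+1) on S (ord j)
    have hagree : ∀ i : Fin N, i ∈ S (ord j) → v i = seqV S φ ord q (n + 1) i := by
      intro i hi
      have hp : ∀ t : Fin M, n + 1 ≤ (t : ℕ) → i ≠ q t := by
        intro t ht hit
        have hjt : j < t := by
          rw [Fin.lt_def]; omega
        exact hq_fresh j t hjt (hit ▸ hi)
      exact seqV_stable S φ ord q (n + 1) i hp M hnM
    have hstep : seqV S φ ord q (n + 1) =
        Function.update (seqV S φ ord q n) (q j)
          (pick (contr (S (ord j)) (φ (ord j)) (q j) (seqV S φ ord q n))) := by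
      rw [seqV, dif_pos hnM, hjn]
    calc ∑ τ : ({i // i ∈ S (ord j)} → Fin 2),
          (starRingEnd ℂ) (φ (ord j) τ) * ∏ i : {i // i ∈ S (ord j)}, v i.1 (τ i)
        = ∑ τ : ({i // i ∈ S (ord j)} → Fin 2),
          (starRingEnd ℂ) (φ (ord j) τ) *
            ∏ i : {i // i ∈ S (ord j)}, seqV S φ ord q (n + 1) i.1 (τ i) := by
          refine Finset.sum_congr rfl fun τ _ => ?_
          congr 1
          exact Finset.prod_congr rfl fun i _ => by rw [hagree i.1 i.2]
      _ = ∑ b, seqV S φ ord q (n + 1) (q j) b *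
            contr (S (ord j)) (φ (ord j)) (q j) (seqV S φ ord q (n + 1)) b :=
          inner_factor (S (ord j)) (φ (ord j)) (q j) (hq_mem j) _
      _ = ∑ b, pick (contr (S (ord j)) (φ (ord j)) (q j) (seqV S φ ord q n)) b *
            contr (S (ord j)) (φ (ord j)) (q j) (seqV S φ ord q n) b := by
          have hc2 : contr (S (ord j)) (φ (ord j)) (q j)
              (Function.update (seqV S φ ord q n) (q j)
                (pick (contr (S (ord j)) (φ (ord j)) (q j) (seqV S φ ord q n)))) =
              contr (S (ord j)) (φ (ord j)) (q j) (seqV S φ ord q n) := by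
            refine contr_congr _ _ _ _ _ (fun p hp => ?_)
            exact Function.update_of_ne hp _ _
          refine Finset.sum_congr rfl fun b _ => ?_
          rw [hstep, Function.update_self, hc2]
      _ = 0 := pick_orth _
  have hclause : ∀ m, Matrix.mulVec (clauseProj (S m) (φ m)) (prodState v) = 0 := by
    intro m
    have := hinner (ord.symm m)
    rw [Equiv.apply_symm_apply] at this
    exact mulVec_clauseProj_eq_zero (S m) (φ m) v this
  refine ⟨v, hvne, hclause, ?_⟩
  funext σ
  show Matrix.mulVec (qsatHam S φ) (prodState v) σ = 0
  unfold qsatHam Matrix.mulVec dotProduct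
  simp only [Matrix.sum_apply, Finset.sum_mul]
  rw [Finset.sum_comm]
  refine Finset.sum_eq_zero fun m _ => ?_
  exact congrFun (hclause m) σ

end
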